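/- Let n, d ≥ 1 be integers and 1 < p < ∞. If V is a matrix weight on ℝⁿ belonging to the matrix reverse Hölder class 𝓑_p with constant C_V, then the scalar function x ↦ ‖V(x)‖ belongs to the scalar reverse Hölder class B_p with constant at most d^{3−1/p} C_V; that is, for every cube Q ⊂ ℝⁿ, (⨍_Q ‖V(x)‖^p dx)^{1/p} ≤ d^{3−1/p} C_V ⨍_Q ‖V(x)‖ dx. -/

import Mathlib

open MeasureTheory
open scoped ComplexOrder

noncomputable section

/-- The open cube in `ℝⁿ` centered at `x` with half side length `r` (side length `2r`). -/
def cube {n : ℕ} (x : Fin n → ℝ) (r : ℝ) : Set (Fin n → ℝ) :=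
  {y | ∀ i, |y i - x i| < r}

/-- Entrywise integral of a real matrix-valued function over a set. -/
def matInt {n d : ℕ} (V : (Fin n → ℝ) → Matrix (Fin d) (Fin d) ℝ)
    (s : Set (Fin n → ℝ)) : Matrix (Fin d) (Fin d) ℝ :=
  Matrix.of fun i j => ∫ y in s, V y i j

/-- Entrywise average of a real matrix-valued function over a set. -/
def matAvg {n d : ℕ} (V : (Fin n → ℝ) → Matrix (Fin d) (Fin d) ℝ)
    (s : Set (Fin n → ℝ)) : Matrix (Fin d) (Fin d) ℝ :=
  Matrix.of fun i j => ⨍ y in s, V y i j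

/-- The quadratic form `⟨A e, e⟩`. -/
def qf {d : ℕ} (A : Matrix (Fin d) (Fin d) ℝ) (e : Fin d → ℝ) : ℝ :=
  dotProduct e (A.mulVec e)

/-- Squared Euclidean norm of a real vector. -/
def vnormSq {d : ℕ} (e : Fin d → ℝ) : ℝ := ∑ i, e i ^ 2

/-- The Euclidean operator norm of a real square matrix (its largest singular value). -/
def matOpNorm {d : ℕ} (A : Matrix (Fin d) (Fin d) ℝ) : ℝ :=
  sSup {t : ℝ | ∃ e : Fin d → ℝ, vnormSq e = 1 ∧ t = Real.sqrt (vnormSq (A.mulVec e))}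

/-- `V` is a matrix weight: measurable, a.e. symmetric positive semidefinite, and with
locally integrable operator norm. -/
def IsMatrixWeight {n d : ℕ} (V : (Fin n → ℝ) → Matrix (Fin d) (Fin d) ℝ) : Prop :=
  (∀ i j, Measurable fun x => V x i j) ∧
  (∀ᵐ (x : Fin n → ℝ) ∂volume, (V x).PosSemidef) ∧
  ∀ (x : Fin n → ℝ) (r : ℝ), 0 < r → IntegrableOn (fun y => matOpNorm (V y)) (cube x r)

/-- The matrix reverse Hölder class `𝓑_p` with constant `C`. -/
def MemBp {n d : ℕ} (p C : ℝ) (V : (Fin n → ℝ) → Matrix (Fin d) (Fin d) ℝ) : Prop :=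
  (∀ (x : Fin n → ℝ) (r : ℝ), 0 < r →
    IntegrableOn (fun y => matOpNorm (V y) ^ p) (cube x r)) ∧
  ∀ (x : Fin n → ℝ) (r : ℝ), 0 < r → ∀ e : Fin d → ℝ,
    (⨍ y in cube x r, qf (V y) e ^ p) ^ (1 / p) ≤ C * qf (matAvg V (cube x r)) e

/-- The scalar reverse Hölder class `B_p` with constant `C`. -/
def MemBpScalar {n : ℕ} (p C : ℝ) (v : (Fin n → ℝ) → ℝ) : Prop :=
  (∀ (x : Fin n → ℝ) (r : ℝ), 0 < r → IntegrableOn (fun y => v y ^ p) (cube x r)) ∧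
  ∀ (x : Fin n → ℝ) (r : ℝ), 0 < r →
    (⨍ y in cube x r, v y ^ p) ^ (1 / p) ≤ C * ⨍ y in cube x r, v y

/-- The averaged matrix `Ψ(x,r;V) = r^{2-n} ∫_{Q(x,r)} V`. -/
def Psi {n d : ℕ} (x : Fin n → ℝ) (r : ℝ)
    (V : (Fin n → ℝ) → Matrix (Fin d) (Fin d) ℝ) : Matrix (Fin d) (Fin d) ℝ :=
  r ^ ((2 : ℝ) - n) • matInt V (cube x r)

/-- The nondegeneracy class `ND`. -/
def MemND {n d : ℕ} (V : (Fin n → ℝ) → Matrix (Fin d) (Fin d) ℝ) : Prop :=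
  ∀ E : Set (Fin n → ℝ), MeasurableSet E → 0 < volume E → (matInt V E).PosDef

/-- The set of radii used to define the lower auxiliary function. -/
def lowerSet {n d : ℕ} (V : (Fin n → ℝ) → Matrix (Fin d) (Fin d) ℝ)
    (x : Fin n → ℝ) : Set ℝ :=
  {r : ℝ | 0 < r ∧ ∃ e : Fin d → ℝ, vnormSq e = 1 ∧ qf (Psi x r V) e ≤ 1}

/-- The lower auxiliary function `m̲(x,V)`. -/
def mLower {n d : ℕ} (V : (Fin n → ℝ) → Matrix (Fin d) (Fin d) ℝ) (x : Fin n → ℝ) : ℝ :=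
  (sSup (lowerSet V x))⁻¹

/-- The set of radii used to define the upper auxiliary function. -/
def upperSet {n d : ℕ} (V : (Fin n → ℝ) → Matrix (Fin d) (Fin d) ℝ)
    (x : Fin n → ℝ) : Set ℝ :=
  {r : ℝ | 0 < r ∧ matOpNorm (Psi x r V) ≤ 1}

/-- The upper auxiliary function `m̄(x,V)`. -/
def mUpper {n d : ℕ} (V : (Fin n → ℝ) → Matrix (Fin d) (Fin d) ℝ) (x : Fin n → ℝ) : ℝ :=
  (sSup (upperSet V x))⁻¹

/-- The set of radii used to define the scalar auxiliary function. -/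
def scalSet {n : ℕ} (v : (Fin n → ℝ) → ℝ) (x : Fin n → ℝ) : Set ℝ :=
  {r : ℝ | 0 < r ∧ r ^ ((2 : ℝ) - n) * ∫ y in cube x r, v y ≤ 1}

/-- The scalar auxiliary function `m(x,v)`. -/
def mScal {n : ℕ} (v : (Fin n → ℝ) → ℝ) (x : Fin n → ℝ) : ℝ :=
  (sSup (scalSet v x))⁻¹

/-- The positive semidefinite square root of a matrix (junk value `0` off the
positive semidefinite matrices). -/
def msqrt {d : ℕ} (A : Matrix (Fin d) (Fin d) ℝ) : Matrix (Fin d) (Fin d) ℝ :=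
  @dite _ A.PosSemidef (Classical.dec _) (fun h => (h.1.eigenvectorUnitary : Matrix (Fin d) (Fin d) ℝ) *
    Matrix.diagonal (RCLike.ofReal ∘ Real.sqrt ∘ h.1.eigenvalues : Fin d → ℝ) *
    star (h.1.eigenvectorUnitary : Matrix (Fin d) (Fin d) ℝ)) fun _ => 0

/-- The noncommutativity class `NC` with constant `N`. -/
def MemNC {n d : ℕ} (N : ℝ) (V : (Fin n → ℝ) → Matrix (Fin d) (Fin d) ℝ) : Prop :=
  ∀ (x : Fin n → ℝ) (e : Fin d → ℝ),
    N * vnormSq e ≤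
      ∫ y in cube x (mLower V x)⁻¹,
        qf (msqrt (V y) * (matInt V (cube x (mLower V x)⁻¹))⁻¹ * msqrt (V y)) e

/-- The matrix `𝓐_∞` class. -/
def MemAinf {n d : ℕ} (V : (Fin n → ℝ) → Matrix (Fin d) (Fin d) ℝ) : Prop :=
  ∀ ε : ℝ, 0 < ε → ∃ δ : ℝ, 0 < δ ∧ ∀ (x : Fin n → ℝ) (r : ℝ), 0 < r →
    ENNReal.ofReal (1 - ε) * volume (cube x r) ≤
      volume {y ∈ cube x r | (V y - δ • matAvg V (cube x r)).PosSemidef}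

/-- The smallest eigenvalue of a symmetric matrix (as the infimum of the Rayleigh
quotient over the unit sphere). -/
def lam1 {d : ℕ} (A : Matrix (Fin d) (Fin d) ℝ) : ℝ :=
  sInf {t : ℝ | ∃ e : Fin d → ℝ, vnormSq e = 1 ∧ t = qf A e}

/-- Squared Frobenius norm of the Jacobian matrix `Du(x)`. -/
def jacFrobSq {n d : ℕ} (u : (Fin n → ℝ) → Fin d → ℝ) (x : Fin n → ℝ) : ℝ :=
  ∑ j, ∑ i, (fderiv ℝ u x (Pi.single i 1) j) ^ 2

/-! ### Complex (Hermitian) versions -/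

/-- The (real-valued) quadratic form `⟨A e, e⟩` of a Hermitian matrix. -/
def qfC {d : ℕ} (A : Matrix (Fin d) (Fin d) ℂ) (e : Fin d → ℂ) : ℝ :=
  (dotProduct (star e) (A.mulVec e)).re

/-- Squared Euclidean norm of a complex vector. -/
def vnormSqC {d : ℕ} (e : Fin d → ℂ) : ℝ := ∑ i, Complex.normSq (e i)

/-- Entrywise integral of a complex matrix-valued function over a set. -/
def matIntC {n d : ℕ} (V : (Fin n → ℝ) → Matrix (Fin d) (Fin d) ℂ)
    (s : Set (Fin n → ℝ)) : Matrix (Fin d) (Fin d) ℂ :=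
  Matrix.of fun i j => ∫ y in s, V y i j

/-- Entrywise average of a complex matrix-valued function over a set. -/
def matAvgC {n d : ℕ} (V : (Fin n → ℝ) → Matrix (Fin d) (Fin d) ℂ)
    (s : Set (Fin n → ℝ)) : Matrix (Fin d) (Fin d) ℂ :=
  Matrix.of fun i j => ⨍ y in s, V y i j

/-- The Euclidean operator norm of a complex square matrix. -/
def matOpNormC {d : ℕ} (A : Matrix (Fin d) (Fin d) ℂ) : ℝ :=
  sSup {t : ℝ | ∃ e : Fin d → ℂ, vnormSqC e = 1 ∧ t = Real.sqrt (vnormSqC (A.mulVec e))}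

/-- `V` is a Hermitian matrix weight. -/
def IsHermWeight {n d : ℕ} (V : (Fin n → ℝ) → Matrix (Fin d) (Fin d) ℂ) : Prop :=
  (∀ i j, Measurable fun x => V x i j) ∧
  (∀ᵐ (x : Fin n → ℝ) ∂volume, (V x).PosSemidef) ∧
  ∀ (x : Fin n → ℝ) (r : ℝ), 0 < r → IntegrableOn (fun y => matOpNormC (V y)) (cube x r)

/-- The nondegeneracy class `ND` for Hermitian weights. -/
def MemNDC {n d : ℕ} (V : (Fin n → ℝ) → Matrix (Fin d) (Fin d) ℂ) : Prop :=
  ∀ E : Set (Fin n → ℝ), MeasurableSet E → 0 < volume E → (matIntC V E).PosDef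

/-- The matrix `𝓐_∞` class for Hermitian weights. -/
def MemAinfC {n d : ℕ} (V : (Fin n → ℝ) → Matrix (Fin d) (Fin d) ℂ) : Prop :=
  ∀ ε : ℝ, 0 < ε → ∃ δ : ℝ, 0 < δ ∧ ∀ (x : Fin n → ℝ) (r : ℝ), 0 < r →
    ENNReal.ofReal (1 - ε) * volume (cube x r) ≤
      volume {y ∈ cube x r | (V y - δ • matAvgC V (cube x r)).PosSemidef}

/-- The geometric average `exp(⨍_s ln w)` of a nonnegative function, with the
conventions `ln 0 = -∞` and `exp (-∞) = 0`. -/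
def geomMean {n : ℕ} (w : (Fin n → ℝ) → ℝ) (s : Set (Fin n → ℝ)) : ℝ :=
  @ite _ ((∀ᵐ y ∂(volume.restrict s), 0 < w y) ∧
      IntegrableOn (fun y => Real.log (w y)) s) (Classical.dec _)
    (Real.exp (⨍ y in s, Real.log (w y))) 0

/-- The scalar `A_∞` class. -/
def ScalarAinf {n : ℕ} (w : (Fin n → ℝ) → ℝ) : Prop :=
  ∀ ε : ℝ, 0 < ε → ∃ δ : ℝ, 0 < δ ∧ ∀ (x : Fin n → ℝ) (r : ℝ), 0 < r →
    ENNReal.ofReal (1 - ε) * volume (cube x r) ≤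
      volume {y ∈ cube x r | δ * ⨍ z in cube x r, w z ≤ w y}

end


namespace Statement0Aux

open Matrix Finset

variable {d : ℕ}

lemma vnormSq_single (i : Fin d) : vnormSq (Pi.single i 1) = 1 := by
  simp [vnormSq, Pi.single_apply]

lemma qf_single (A : Matrix (Fin d) (Fin d) ℝ) (i : Fin d) :
    qf A (Pi.single i 1) = A i i := by
  simp [qf]

lemma diag_nonneg {A : Matrix (Fin d) (Fin d) ℝ} (hA : A.PosSemidef) (i : Fin d) :
    0 ≤ A i i := by
  have h := hA.dotProduct_mulVec_nonneg (Pi.single i 1)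
  rw [star_trivial] at h
  simpa using h

lemma entry_sq_le {A : Matrix (Fin d) (Fin d) ℝ} (hA : A.PosSemidef) (k j : Fin d) :
    A k j ^ 2 ≤ A k k * A j j := by
  have key : ∀ t : ℝ, 0 ≤ A k k * (t * t) + (2 * A k j) * t + A j j := by
    intro t
    have h := hA.dotProduct_mulVec_nonneg (t • (Pi.single k 1 : Fin d → ℝ) + Pi.single j 1)
    rw [star_trivial] at h
    have hjk : A j k = A k j := by
      have := hA.1.apply j k
      simpa using this.symm
    simp only [Matrix.mulVec_add, Matrix.mulVec_smul, Matrix.mulVec_single,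
      add_dotProduct, smul_dotProduct, dotProduct_add,
      dotProduct_smul, single_dotProduct, mul_one,
      smul_eq_mul, Pi.add_apply, Pi.smul_apply, Pi.single_apply,
      Matrix.col_apply, MulOpposite.op_one, one_smul, one_mul] at h
    rw [hjk] at h
    linarith [h]
  have hdisc := discrim_le_zero key
  rw [discrim] at hdisc
  nlinarith [hdisc]

lemma sqrt_le_trace {A : Matrix (Fin d) (Fin d) ℝ} (hA : A.PosSemidef) {e : Fin d → ℝ}
    (he : vnormSq e = 1) : Real.sqrt (vnormSq (A.mulVec e)) ≤ ∑ i, A i i := by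
  have htr : 0 ≤ ∑ i, A i i := Finset.sum_nonneg fun i _ => diag_nonneg hA i
  have h1 : vnormSq (A.mulVec e) ≤ (∑ i, A i i) ^ 2 := by
    have hrow : ∀ k, (A.mulVec e k) ^ 2 ≤ (∑ j, A k j ^ 2) * (∑ j, e j ^ 2) := by
      intro k
      have : A.mulVec e k = ∑ j, A k j * e j := rfl
      rw [this]
      exact Finset.sum_mul_sq_le_sq_mul_sq _ _ _
    calc vnormSq (A.mulVec e) = ∑ k, (A.mulVec e k) ^ 2 := rfl
      _ ≤ ∑ k, (∑ j, A k j ^ 2) * (∑ j, e j ^ 2) :=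
          Finset.sum_le_sum fun k _ => hrow k
      _ = ∑ k, ∑ j, A k j ^ 2 := by
          have he' : (∑ j, e j ^ 2) = 1 := he
          simp [he']
      _ ≤ ∑ k, ∑ j, A k k * A j j :=
          Finset.sum_le_sum fun k _ => Finset.sum_le_sum fun j _ => entry_sq_le hA k j
      _ = (∑ i, A i i) ^ 2 := by
          rw [sq, Finset.sum_mul_sum]
  calc Real.sqrt (vnormSq (A.mulVec e)) ≤ Real.sqrt ((∑ i, A i i) ^ 2) :=
      Real.sqrt_le_sqrt h1
    _ = |∑ i, A i i| := Real.sqrt_sq_eq_abs _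
    _ = ∑ i, A i i := abs_of_nonneg htr

lemma bddAbove_S {A : Matrix (Fin d) (Fin d) ℝ} (hA : A.PosSemidef) :
    BddAbove {t : ℝ | ∃ e : Fin d → ℝ, vnormSq e = 1 ∧ t = Real.sqrt (vnormSq (A.mulVec e))} := by
  refine ⟨∑ i, A i i, ?_⟩
  rintro t ⟨e, he, rfl⟩
  exact sqrt_le_trace hA he

lemma sqrt_le_opNorm {A : Matrix (Fin d) (Fin d) ℝ} (hA : A.PosSemidef) {e : Fin d → ℝ}
    (he : vnormSq e = 1) : Real.sqrt (vnormSq (A.mulVec e)) ≤ matOpNorm A :=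
  le_csSup (bddAbove_S hA) ⟨e, he, rfl⟩

lemma diag_le_opNorm {A : Matrix (Fin d) (Fin d) ℝ} (hA : A.PosSemidef) (i : Fin d) :
    A i i ≤ matOpNorm A := by
  have h2 : (A.mulVec (Pi.single i 1)) i = A i i := by simp
  have h3 : ((A.mulVec (Pi.single i 1)) i) ^ 2 ≤ vnormSq (A.mulVec (Pi.single i 1)) :=
    Finset.single_le_sum (f := fun k => (A.mulVec (Pi.single i 1) k) ^ 2)
      (fun k _ => sq_nonneg _) (Finset.mem_univ i)
  have h1 : A i i ≤ Real.sqrt (vnormSq (A.mulVec (Pi.single i 1))) := by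
    calc A i i ≤ |A i i| := le_abs_self _
      _ = Real.sqrt ((A i i) ^ 2) := (Real.sqrt_sq_eq_abs _).symm
      _ ≤ Real.sqrt (vnormSq (A.mulVec (Pi.single i 1))) := by
          apply Real.sqrt_le_sqrt
          rw [← h2]
          exact h3
  exact h1.trans (sqrt_le_opNorm hA (vnormSq_single i))

lemma opNorm_nonneg {A : Matrix (Fin d) (Fin d) ℝ} (hA : A.PosSemidef) (hd : 1 ≤ d) :
    0 ≤ matOpNorm A :=
  (Real.sqrt_nonneg _).trans (sqrt_le_opNorm hA (vnormSq_single (⟨0, hd⟩ : Fin d)))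

lemma opNorm_le_trace {A : Matrix (Fin d) (Fin d) ℝ} (hA : A.PosSemidef) (hd : 1 ≤ d) :
    matOpNorm A ≤ ∑ i, A i i := by
  have hne : {t : ℝ | ∃ e : Fin d → ℝ, vnormSq e = 1 ∧
      t = Real.sqrt (vnormSq (A.mulVec e))}.Nonempty :=
    ⟨_, ⟨Pi.single (⟨0, hd⟩ : Fin d) 1, vnormSq_single _, rfl⟩⟩
  refine csSup_le hne ?_
  rintro t ⟨e, he, rfl⟩
  exact sqrt_le_trace hA he

lemma trace_le_opNorm {A : Matrix (Fin d) (Fin d) ℝ} (hA : A.PosSemidef) :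
    ∑ i, A i i ≤ (d : ℝ) * matOpNorm A := by
  calc ∑ i, A i i ≤ ∑ _i : Fin d, matOpNorm A :=
      Finset.sum_le_sum fun i _ => diag_le_opNorm hA i
    _ = (d : ℝ) * matOpNorm A := by simp [Finset.sum_const, nsmul_eq_mul]

lemma rpow_add_rpow_le_rpow' {p x y : ℝ} (hp : 1 ≤ p) (hx : 0 ≤ x) (hy : 0 ≤ y) :
    x ^ p + y ^ p ≤ (x + y) ^ p := by
  have h := NNReal.add_rpow_le_rpow_add x.toNNReal y.toNNReal hp
  have h2 := NNReal.coe_le_coe.2 h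
  push_cast at h2
  rwa [Real.coe_toNNReal x hx, Real.coe_toNNReal y hy] at h2

lemma sum_rpow_le_rpow_sum {p : ℝ} (hp : 1 ≤ p) {ι : Type*} (s : Finset ι) (f : ι → ℝ)
    (hf : ∀ i ∈ s, 0 ≤ f i) : ∑ i ∈ s, f i ^ p ≤ (∑ i ∈ s, f i) ^ p := by
  induction s using Finset.cons_induction with
  | empty => simp [Real.zero_rpow (by linarith : p ≠ 0)]
  | cons a s ha ih =>
    rw [Finset.sum_cons, Finset.sum_cons]
    have h1 : 0 ≤ ∑ i ∈ s, f i :=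
      Finset.sum_nonneg fun i hi => hf i (Finset.mem_cons_of_mem hi)
    calc f a ^ p + ∑ i ∈ s, f i ^ p ≤ f a ^ p + (∑ i ∈ s, f i) ^ p := by
          linarith [ih (fun i hi => hf i (Finset.mem_cons_of_mem hi))]
      _ ≤ _ := rpow_add_rpow_le_rpow' hp (hf a (Finset.mem_cons_self a s)) h1

lemma rpow_sum_le {p : ℝ} (hp : 1 ≤ p) (hd : 1 ≤ d) (a : Fin d → ℝ) (ha : ∀ i, 0 ≤ a i) :
    (∑ i, a i) ^ p ≤ (d : ℝ) ^ (p - 1) * ∑ i, a i ^ p := by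
  have hd0 : (0 : ℝ) < d := by exact_mod_cast Nat.lt_of_lt_of_le Nat.zero_lt_one hd
  have h := Real.rpow_arith_mean_le_arith_mean_rpow Finset.univ (fun _ : Fin d => (d : ℝ)⁻¹)
      (fun i => (d : ℝ) * a i) (fun i _ => inv_nonneg.2 hd0.le)
      (by
        rw [Finset.sum_const]
        simp only [Finset.card_univ, Fintype.card_fin, nsmul_eq_mul]
        field_simp)
      (fun i _ => mul_nonneg hd0.le (ha i)) hp
  have hL : ∑ i, (d : ℝ)⁻¹ * ((d : ℝ) * a i) = ∑ i, a i := by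
    refine Finset.sum_congr rfl fun i _ => ?_
    field_simp
  have hR : ∑ i, (d : ℝ)⁻¹ * ((d : ℝ) * a i) ^ p = (d : ℝ) ^ (p - 1) * ∑ i, a i ^ p := by
    rw [Finset.mul_sum]
    refine Finset.sum_congr rfl fun i _ => ?_
    rw [Real.mul_rpow hd0.le (ha i), Real.rpow_sub hd0, Real.rpow_one]
    field_simp
  rw [hL, hR] at h
  exact h

lemma opNorm_rpow_le {A : Matrix (Fin d) (Fin d) ℝ} (hA : A.PosSemidef) (hd : 1 ≤ d) {p : ℝ}
    (hp : 1 ≤ p) : matOpNorm A ^ p ≤ (d : ℝ) ^ (p - 1) * ∑ i, (A i i) ^ p := by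
  calc matOpNorm A ^ p ≤ (∑ i, A i i) ^ p :=
      Real.rpow_le_rpow (opNorm_nonneg hA hd) (opNorm_le_trace hA hd) (by linarith)
    _ ≤ _ := rpow_sum_le hp hd _ (fun i => diag_nonneg hA i)

end Statement0Aux

open Statement0Aux in

theorem statement0 {n d : ℕ} (hn : 1 ≤ n) (hd : 1 ≤ d) (p C_V : ℝ) (hp : 1 < p)
    (hCV : 0 < C_V) (V : (Fin n → ℝ) → Matrix (Fin d) (Fin d) ℝ)
    (hW : IsMatrixWeight V) (hBp : MemBp p C_V V) :
    MemBpScalar p ((d : ℝ) ^ (3 - 1 / p) * C_V) fun x => matOpNorm (V x) := by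
  obtain ⟨hmeas, hpsd, hloc⟩ := hW
  obtain ⟨hBpInt, hBpIneq⟩ := hBp
  have hp1 : 1 ≤ p := hp.le
  have hp0 : (0 : ℝ) < p := lt_trans one_pos hp
  have hpne : p ≠ 0 := hp0.ne'
  have hd0 : (0 : ℝ) < d := by exact_mod_cast Nat.lt_of_lt_of_le Nat.zero_lt_one hd
  have hd1 : (1 : ℝ) ≤ d := by exact_mod_cast hd
  constructor
  · exact fun x r hr => hBpInt x r hr
  intro x r hr
  have haeQ : ∀ᵐ y ∂(volume.restrict (cube x r)), (V y).PosSemidef := ae_restrict_of_ae hpsd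
  set Q := cube x r with hQdef
  set c : ℝ := ((volume Q).toReal)⁻¹ with hc
  have hc0 : 0 ≤ c := inv_nonneg.2 ENNReal.toReal_nonneg
  -- integrability facts
  have hI1 : IntegrableOn (fun y => matOpNorm (V y)) Q := hloc x r hr
  have hIp : IntegrableOn (fun y => matOpNorm (V y) ^ p) Q := hBpInt x r hr
  have hIdiag : ∀ i : Fin d, IntegrableOn (fun y => V y i i) Q := by
    intro i
    refine hI1.mono' ((hmeas i i).aestronglyMeasurable) ?_
    filter_upwards [haeQ] with y hy
    rw [Real.norm_eq_abs, abs_of_nonneg (diag_nonneg hy i)]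
    exact diag_le_opNorm hy i
  have hIdiagp : ∀ i : Fin d, IntegrableOn (fun y => V y i i ^ p) Q := by
    intro i
    refine hIp.mono' (((Real.continuous_rpow_const hp0.le).measurable.comp (hmeas i i)).aestronglyMeasurable) ?_
    filter_upwards [haeQ] with y hy
    rw [Real.norm_eq_abs, abs_of_nonneg (Real.rpow_nonneg (diag_nonneg hy i) p)]
    exact Real.rpow_le_rpow (diag_nonneg hy i) (diag_le_opNorm hy i) hp0.le
  -- step 1 : ∫ ‖V‖^p ≤ d^(p-1) * ∑ᵢ ∫ Vᵢᵢ^p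
  have hsum_int : IntegrableOn (fun y => (d : ℝ) ^ (p - 1) * ∑ i, V y i i ^ p) Q :=
    (integrable_finset_sum _ (fun i _ => hIdiagp i)).const_mul _
  have step1 : (∫ y in Q, matOpNorm (V y) ^ p) ≤
      (d : ℝ) ^ (p - 1) * ∑ i, ∫ y in Q, V y i i ^ p := by
    have hmono : (∫ y in Q, matOpNorm (V y) ^ p) ≤
        ∫ y in Q, (d : ℝ) ^ (p - 1) * ∑ i, V y i i ^ p := by
      refine integral_mono_ae hIp hsum_int ?_
      filter_upwards [haeQ] with y hy
      exact opNorm_rpow_le hy hd hp1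
    rwa [integral_const_mul, integral_finset_sum _ (fun i _ => hIdiagp i)] at hmono
  -- nonnegativity of various integrals
  have hTnn : ∀ i : Fin d, 0 ≤ ∫ y in Q, V y i i := by
    intro i
    refine integral_nonneg_of_ae ?_
    filter_upwards [haeQ] with y hy
    exact diag_nonneg hy i
  have hNnn : 0 ≤ ∫ y in Q, matOpNorm (V y) := by
    refine integral_nonneg_of_ae ?_
    filter_upwards [haeQ] with y hy
    exact opNorm_nonneg hy hd
  have hInn : 0 ≤ ∫ y in Q, matOpNorm (V y) ^ p := by
    refine integral_nonneg_of_ae ?_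
    filter_upwards [haeQ] with y hy
    exact Real.rpow_nonneg (opNorm_nonneg hy hd) p
  -- hypothesis applied to coordinate vectors
  have hyp_i : ∀ i : Fin d, c * ∫ y in Q, V y i i ^ p ≤
      (C_V * (c * ∫ y in Q, V y i i)) ^ p := by
    intro i
    have h := hBpIneq x r hr (Pi.single i 1)
    simp only [qf_single] at h
    have havg1 : (⨍ y in Q, V y i i ^ p) = c * ∫ y in Q, V y i i ^ p := by
      rw [setAverage_eq, smul_eq_mul]; rfl
    have havg2 : matAvg V Q i i = c * ∫ y in Q, V y i i := by
      show (⨍ y in Q, V y i i) = _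
      rw [setAverage_eq, smul_eq_mul]; rfl
    rw [havg1, havg2] at h
    have hnn : 0 ≤ c * ∫ y in Q, V y i i ^ p := by
      refine mul_nonneg hc0 (integral_nonneg_of_ae ?_)
      filter_upwards [haeQ] with y hy
      exact Real.rpow_nonneg (diag_nonneg hy i) p
    calc c * ∫ y in Q, V y i i ^ p
        = ((c * ∫ y in Q, V y i i ^ p) ^ (1 / p)) ^ p := by
          rw [← Real.rpow_mul hnn, one_div_mul_cancel hpne, Real.rpow_one]
      _ ≤ (C_V * (c * ∫ y in Q, V y i i)) ^ p :=
          Real.rpow_le_rpow (Real.rpow_nonneg hnn _) h hp0.le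
  -- sum of the traces is controlled by the operator norm
  have htrace : ∑ i, ∫ y in Q, V y i i ≤ (d : ℝ) * ∫ y in Q, matOpNorm (V y) := by
    rw [← integral_finset_sum _ (fun i _ => hIdiag i), ← integral_const_mul]
    refine integral_mono_ae (integrable_finset_sum _ (fun i _ => hIdiag i))
      (hI1.const_mul _) ?_
    filter_upwards [haeQ] with y hy
    exact trace_le_opNorm hy
  -- the key chain of inequalities
  set N : ℝ := ∫ y in Q, matOpNorm (V y) with hN
  set I : ℝ := ∫ y in Q, matOpNorm (V y) ^ p with hI
  have hYnn : 0 ≤ C_V * (c * ((d : ℝ) * N)) :=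
    mul_nonneg hCV.le (mul_nonneg hc0 (mul_nonneg hd0.le hNnn))
  have key : c * I ≤ (d : ℝ) ^ (p - 1) * (C_V * (c * ((d : ℝ) * N))) ^ p := by
    calc c * I ≤ c * ((d : ℝ) ^ (p - 1) * ∑ i, ∫ y in Q, V y i i ^ p) :=
        mul_le_mul_of_nonneg_left step1 hc0
      _ = (d : ℝ) ^ (p - 1) * ∑ i, (c * ∫ y in Q, V y i i ^ p) := by
          rw [← Finset.mul_sum]
          ring
      _ ≤ (d : ℝ) ^ (p - 1) * ∑ i, (C_V * (c * ∫ y in Q, V y i i)) ^ p := by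
          refine mul_le_mul_of_nonneg_left (Finset.sum_le_sum fun i _ => hyp_i i)
            (Real.rpow_nonneg hd0.le _)
      _ ≤ (d : ℝ) ^ (p - 1) * (∑ i, C_V * (c * ∫ y in Q, V y i i)) ^ p := by
          refine mul_le_mul_of_nonneg_left
            (sum_rpow_le_rpow_sum hp1 _ _ (fun i _ =>
              mul_nonneg hCV.le (mul_nonneg hc0 (hTnn i))))
            (Real.rpow_nonneg hd0.le _)
      _ = (d : ℝ) ^ (p - 1) * (C_V * (c * ∑ i, ∫ y in Q, V y i i)) ^ p := by
          rw [← Finset.mul_sum, ← Finset.mul_sum]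
      _ ≤ (d : ℝ) ^ (p - 1) * (C_V * (c * ((d : ℝ) * N))) ^ p := by
          refine mul_le_mul_of_nonneg_left
            (Real.rpow_le_rpow
              (mul_nonneg hCV.le (mul_nonneg hc0 (Finset.sum_nonneg fun i _ => hTnn i)))
              (by
                have := mul_le_mul_of_nonneg_left htrace hc0
                nlinarith [this, hCV.le])
              hp0.le)
            (Real.rpow_nonneg hd0.le _)
  -- finish
  rw [setAverage_eq, setAverage_eq, smul_eq_mul, smul_eq_mul]
  have hcI : 0 ≤ c * I := mul_nonneg hc0 hInn
  have hcN : 0 ≤ c * N := mul_nonneg hc0 hNnn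
  calc (c * I) ^ (1 / p)
      ≤ ((d : ℝ) ^ (p - 1) * (C_V * (c * ((d : ℝ) * N))) ^ p) ^ (1 / p) :=
        Real.rpow_le_rpow hcI key (by positivity)
    _ = (d : ℝ) ^ ((p - 1) * (1 / p)) * (C_V * (c * ((d : ℝ) * N))) := by
        rw [Real.mul_rpow (Real.rpow_nonneg hd0.le _) (Real.rpow_nonneg hYnn _),
          ← Real.rpow_mul hd0.le, ← Real.rpow_mul hYnn, mul_one_div_cancel hpne,
          Real.rpow_one]
    _ = (d : ℝ) ^ (1 - 1 / p) * (d : ℝ) * (C_V * (c * N)) := by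
        rw [show (p - 1) * (1 / p) = 1 - 1 / p by field_simp]
        ring
    _ = (d : ℝ) ^ (2 - 1 / p) * (C_V * (c * N)) := by
        rw [show (2 : ℝ) - 1 / p = (1 - 1 / p) + 1 by ring, Real.rpow_add hd0,
          Real.rpow_one]
    _ ≤ (d : ℝ) ^ (3 - 1 / p) * (C_V * (c * N)) :=
        mul_le_mul_of_nonneg_right
          (Real.rpow_le_rpow_of_exponent_le hd1 (by linarith))
          (mul_nonneg hCV.le hcN)
    _ = (d : ℝ) ^ (3 - 1 / p) * C_V * (c * N) := by ring
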